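/- Let A_1,...,A_{n+1} be exchangeable real-valued random variables with almost surely no ties. Define the p-value p = (1/(n+1)) (|{i ≤ n : A_i ≥ A_{n+1}}| + 1). Then for every t ∈ [0,1], P(p ≤ t) ≤ t. -/

import Mathlib

open MeasureTheory Finset
open scoped ENNReal

noncomputable def rk {n : ℕ} (x : Fin (n + 1) → ℝ) (j : Fin (n + 1)) : ℕ :=
  (Finset.univ.filter (fun i => x j ≤ x i)).card

lemma rk_comp {n : ℕ} (x : Fin (n + 1) → ℝ) (σ : Equiv.Perm (Fin (n + 1)))
    (j : Fin (n + 1)) : rk (fun i => x (σ i)) j = rk x (σ j) := by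
  unfold rk
  apply Finset.card_bij' (fun i _ => σ i) (fun i _ => σ.symm i) <;> simp

lemma rk_pos {n : ℕ} (x : Fin (n + 1) → ℝ) (j : Fin (n + 1)) : 1 ≤ rk x j := by
  have : j ∈ Finset.univ.filter (fun i => x j ≤ x i) := by simp
  exact Finset.card_pos.mpr ⟨j, this⟩

lemma rk_lt {n : ℕ} (x : Fin (n + 1) → ℝ) {j k : Fin (n + 1)} (hlt : x j < x k) :
    rk x k < rk x j := by
  apply Finset.card_lt_card
  constructor
  · intro i hi
    simp only [Finset.mem_filter, Finset.mem_univ, true_and] at hi ⊢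
    exact le_trans hlt.le hi
  · intro hsub
    have : j ∈ Finset.univ.filter (fun i => x k ≤ x i) := hsub (by simp)
    simp only [Finset.mem_filter, Finset.mem_univ, true_and] at this
    exact absurd this (not_le.mpr hlt)

lemma rk_inj {n : ℕ} (x : Fin (n + 1) → ℝ) (hx : ∀ i j, i ≠ j → x i ≠ x j) :
    Function.Injective (rk x) := by
  intro j k h
  by_contra hjk
  rcases (hx j k hjk).lt_or_gt with h1 | h1
  · exact absurd h (rk_lt x h1).ne'
  · exact absurd h (rk_lt x h1).ne

lemma card_rk_le {n : ℕ} (x : Fin (n + 1) → ℝ) (hx : ∀ i j, i ≠ j → x i ≠ x j) (m : ℕ) :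
    (Finset.univ.filter (fun j => rk x j ≤ m)).card ≤ m := by
  have h : (Finset.univ.filter (fun j => rk x j ≤ m)).card ≤ (Finset.Icc 1 m).card := by
    apply Finset.card_le_card_of_injOn (rk x)
    · intro j hj
      simp only [Finset.mem_coe, Finset.mem_filter, Finset.mem_univ, true_and] at hj
      exact Finset.mem_Icc.mpr ⟨rk_pos x j, hj⟩
    · exact (rk_inj x hx).injOn
  simpa [Nat.card_Icc] using h

lemma measurable_rk {n : ℕ} (j : Fin (n + 1)) :
    Measurable (fun x : Fin (n + 1) → ℝ => rk x j) := by
  unfold rk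
  simp_rw [Finset.card_filter]
  exact Finset.measurable_sum _ (fun i _ =>
    Measurable.ite (measurableSet_le (measurable_pi_apply _) (measurable_pi_apply _))
      measurable_const measurable_const)

theorem conformal_pvalue_superuniform
    {Ω : Type*} [MeasurableSpace Ω] (P : Measure Ω) [IsProbabilityMeasure P]
    (n : ℕ) (hn : 0 < n) (A : Fin (n + 1) → Ω → ℝ)
    (hmeas : ∀ i, Measurable (A i))
    (hexch : ∀ σ : Equiv.Perm (Fin (n + 1)),
      Measure.map (fun ω i => A (σ i) ω) P = Measure.map (fun ω i => A i ω) P)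
    (hdistinct : P {ω | ∀ i j, i ≠ j → A i ω ≠ A j ω} = 1) :
    ∀ t ∈ Set.Icc (0 : ℝ) 1,
      P {ω | (1 / (n + 1 : ℝ)) *
          (((Finset.univ.filter
              (fun i : Fin n => A (Fin.last n) ω ≤ A i.castSucc ω)).card : ℝ) + 1) ≤ t}
        ≤ ENNReal.ofReal t := by
  intro t ht
  obtain ⟨ht0, ht1⟩ := ht
  set V : Ω → Fin (n + 1) → ℝ := fun ω i => A i ω with hV
  have hVmeas : Measurable V := measurable_pi_lambda _ (fun i => hmeas i)
  set m : ℕ := ⌊t * (n + 1)⌋₊ with hm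
  have hnpos : (0 : ℝ) < n + 1 := by positivity
  have htn0 : (0 : ℝ) ≤ t * (n + 1) := by positivity
  -- rewrite the event
  have hrk_eq : ∀ ω, rk (V ω) (Fin.last n)
      = (Finset.univ.filter
          (fun i : Fin n => A (Fin.last n) ω ≤ A i.castSucc ω)).card + 1 := by
    intro ω
    unfold rk
    rw [Finset.card_filter, Finset.card_filter, Fin.sum_univ_castSucc]
    simp [hV]
  have hevent : {ω | (1 / (n + 1 : ℝ)) *
          (((Finset.univ.filter
              (fun i : Fin n => A (Fin.last n) ω ≤ A i.castSucc ω)).card : ℝ) + 1) ≤ t}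
      = {ω | rk (V ω) (Fin.last n) ≤ m} := by
    ext ω
    simp only [Set.mem_setOf_eq, hrk_eq ω]
    rw [hm, Nat.le_floor_iff htn0]
    rw [one_div, inv_mul_le_iff₀ hnpos]
    push_cast
    constructor <;> intro h <;> linarith
  rw [hevent]
  -- the no-ties set
  set T : Set Ω := {ω | ∀ i j, i ≠ j → A i ω ≠ A j ω} with hTdef
  have hT : MeasurableSet T := by
    have : T = ⋂ i, ⋂ j, ⋂ (_ : i ≠ j), {ω | A i ω ≠ A j ω} := by
      ext ω; simp [hTdef]
    rw [this]
    exact MeasurableSet.iInter fun i => MeasurableSet.iInter fun j =>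
      MeasurableSet.iInter fun _ => (measurableSet_eq_fun (hmeas i) (hmeas j)).compl
  have hTc : P Tᶜ = 0 := by
    rw [measure_compl hT (measure_ne_top P T), hdistinct, measure_univ, tsub_self]
  -- the rank events
  set S : Fin (n + 1) → Set Ω := fun j => {ω | rk (V ω) j ≤ m} ∩ T with hSdef
  have hSmeas : ∀ j, MeasurableSet (S j) := by
    intro j
    exact (((measurable_rk j).comp hVmeas) measurableSet_Iic).inter hT
  have hSP : ∀ j, P (S j) = P {ω | rk (V ω) j ≤ m} := fun j => measure_inter_conull hTc
  -- exchangeability: all rank events have the same probability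
  have hexch' : ∀ j, P {ω | rk (V ω) j ≤ m} = P {ω | rk (V ω) (Fin.last n) ≤ m} := by
    intro j
    set σ : Equiv.Perm (Fin (n + 1)) := Equiv.swap j (Fin.last n) with hσ
    have hσlast : σ (Fin.last n) = j := Equiv.swap_apply_right _ _
    have hWmeas : Measurable (fun ω i => A (σ i) ω) :=
      measurable_pi_lambda _ (fun i => hmeas (σ i))
    have hBset : MeasurableSet {x : Fin (n + 1) → ℝ | rk x (Fin.last n) ≤ m} :=
      measurable_rk (Fin.last n) measurableSet_Iic
    have h1 : {ω | rk (V ω) j ≤ m}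
        = (fun ω i => A (σ i) ω) ⁻¹' {x | rk x (Fin.last n) ≤ m} := by
      ext ω
      simp only [Set.mem_setOf_eq, Set.mem_preimage]
      have : rk (fun i => A (σ i) ω) (Fin.last n) = rk (V ω) (σ (Fin.last n)) :=
        rk_comp (V ω) σ (Fin.last n)
      rw [this, hσlast]
    have h2 : {ω | rk (V ω) (Fin.last n) ≤ m}
        = V ⁻¹' {x | rk x (Fin.last n) ≤ m} := rfl
    rw [h1, h2, ← Measure.map_apply hWmeas hBset, ← Measure.map_apply hVmeas hBset,
      hexch σ]
  -- sum of the probabilities bounded by m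
  have hsum : ∑ j : Fin (n + 1), P (S j) ≤ (m : ℝ≥0∞) := by
    have hpt : ∀ ω, (∑ j : Fin (n + 1), (S j).indicator (fun _ => (1 : ℝ≥0∞)) ω)
        ≤ (m : ℝ≥0∞) := by
      intro ω
      have h1 : (∑ j : Fin (n + 1), (S j).indicator (fun _ => (1 : ℝ≥0∞)) ω)
          = ((Finset.univ.filter (fun j => ω ∈ S j)).card : ℝ≥0∞) := by
        rw [Finset.card_filter]
        push_cast
        congr 1
        funext j
        by_cases h : ω ∈ S j <;> simp [Set.indicator_apply, h]
      rw [h1]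
      by_cases hωT : ω ∈ T
      · have hsub : Finset.univ.filter (fun j => ω ∈ S j)
            ⊆ Finset.univ.filter (fun j => rk (V ω) j ≤ m) := by
          intro j hj
          simp only [Finset.mem_filter, Finset.mem_univ, true_and, hSdef,
            Set.mem_inter_iff, Set.mem_setOf_eq] at hj ⊢
          exact hj.1
        have := le_trans (Finset.card_le_card hsub) (card_rk_le (V ω) hωT m)
        exact_mod_cast this
      · have : Finset.univ.filter (fun j => ω ∈ S j) = ∅ := by
          apply Finset.filter_eq_empty_iff.mpr
          intro j _
          simp only [hSdef, Set.mem_inter_iff]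
          tauto
        simp [this]
    calc ∑ j : Fin (n + 1), P (S j)
        = ∑ j : Fin (n + 1), ∫⁻ ω, (S j).indicator (fun _ => (1 : ℝ≥0∞)) ω ∂P := by
          exact Finset.sum_congr rfl fun j _ => (lintegral_indicator_one (hSmeas j)).symm
      _ = ∫⁻ ω, ∑ j : Fin (n + 1), (S j).indicator (fun _ => (1 : ℝ≥0∞)) ω ∂P := by
          rw [lintegral_finset_sum]
          exact fun j _ => measurable_const.indicator (hSmeas j)
      _ ≤ ∫⁻ _, (m : ℝ≥0∞) ∂P := lintegral_mono hpt
      _ = (m : ℝ≥0∞) := by simp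
  -- conclude
  have hcount : ∑ j : Fin (n + 1), P (S j)
      = (n + 1 : ℝ≥0∞) * P {ω | rk (V ω) (Fin.last n) ≤ m} := by
    have : ∀ j : Fin (n + 1), P (S j) = P {ω | rk (V ω) (Fin.last n) ≤ m} :=
      fun j => (hSP j).trans (hexch' j)
    rw [Finset.sum_congr rfl (fun j _ => this j), Finset.sum_const, Finset.card_univ,
      Fintype.card_fin, nsmul_eq_mul]
    push_cast
    ring
  have hmain : (n + 1 : ℝ≥0∞) * P {ω | rk (V ω) (Fin.last n) ≤ m} ≤ (m : ℝ≥0∞) := by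
    rw [← hcount]; exact hsum
  have hfin : P {ω | rk (V ω) (Fin.last n) ≤ m} * (n + 1 : ℝ≥0∞)
      ≤ ENNReal.ofReal t * (n + 1 : ℝ≥0∞) := by
    rw [mul_comm]
    refine le_trans hmain ?_
    have h1 : (m : ℝ) ≤ t * (n + 1) := Nat.floor_le htn0
    have h2 : (m : ℝ≥0∞) ≤ ENNReal.ofReal (t * (n + 1)) := by
      rw [← ENNReal.ofReal_natCast]
      exact ENNReal.ofReal_le_ofReal h1
    refine le_trans h2 ?_
    rw [ENNReal.ofReal_mul ht0]
    apply mul_le_mul_right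
    rw [ENNReal.ofReal_add (by positivity) zero_le_one]
    simp [ENNReal.ofReal_natCast]
  have := (ENNReal.mul_le_mul_iff_left (by simp) (by finiteness)).mp hfin
  exact this
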